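/- Consider an N-player game with strategy sets K_i ⊆ ℝ^{n_i} and cost functions f_i, and assume 0 ∈ K and each K_i is symmetric (x ∈ K_i implies −x ∈ K_i). Then the game is a potential game if and only if for all players i < j, all z_i ∈ K_i, z_j ∈ K_j, z_{-{i,j}} ∈ K_{-{i,j}}, and all y_i, y_j with z_i + y_i ∈ K_i and z_j + y_j ∈ K_j, one has h_{ij}(z_i, z_j, y_i, y_j; z_{-{i,j}}) = h_{ij}(0, 0, z_i + y_i, z_j + y_j; z_{-{i,j}}) − h_{ij}(0, 0, z_i, z_j; z_{-{i,j}}). -/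
import Mathlib


noncomputable section

/-- The set of joint strategy profiles of a game with strategy sets `K i ⊆ ℝ^{n i}`. -/
def jointK {N : ℕ} {n : Fin N → ℕ}
    (K : ∀ i, Set (EuclideanSpace ℝ (Fin (n i)))) :
    Set (∀ i, EuclideanSpace ℝ (Fin (n i))) :=
  {x | ∀ i, x i ∈ K i}

/-- `φ` is an exact potential function for the game with strategy sets `K` and costs `f`. -/
def IsPotential {N : ℕ} {n : Fin N → ℕ}
    (K : ∀ i, Set (EuclideanSpace ℝ (Fin (n i))))
    (f : Fin N → (∀ i, EuclideanSpace ℝ (Fin (n i))) → ℝ)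
    (φ : (∀ i, EuclideanSpace ℝ (Fin (n i))) → ℝ) : Prop :=
  ∀ i : Fin N, ∀ x ∈ jointK K, ∀ xi' ∈ K i,
    f i (Function.update x i xi') - f i x = φ (Function.update x i xi') - φ x

/-- The game is a potential game. -/
def IsPotentialGame {N : ℕ} {n : Fin N → ℕ}
    (K : ∀ i, Set (EuclideanSpace ℝ (Fin (n i))))
    (f : Fin N → (∀ i, EuclideanSpace ℝ (Fin (n i))) → ℝ) : Prop :=
  ∃ φ, IsPotential K f φ

/-- `hij f i j z yi yj` : the pairwise incremental cost difference
`f_i(z_i+y_i, z_j; z₋) − f_i(z_i, z_j; z₋) + f_j(z_j+y_j, z_i+y_i; z₋) − f_j(z_j, z_i+y_i; z₋)`. -/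
def hij {N : ℕ} {n : Fin N → ℕ}
    (f : Fin N → (∀ k, EuclideanSpace ℝ (Fin (n k))) → ℝ)
    (i j : Fin N) (z : ∀ k, EuclideanSpace ℝ (Fin (n k)))
    (yi : EuclideanSpace ℝ (Fin (n i))) (yj : EuclideanSpace ℝ (Fin (n j))) : ℝ :=
  f i (Function.update z i (z i + yi)) - f i z
    + f j (Function.update (Function.update z i (z i + yi)) j (z j + yj))
    - f j (Function.update z i (z i + yi))

section helpers

variable {N : ℕ} {n : Fin N → ℕ}

lemma mem_update {K : ∀ i, Set (EuclideanSpace ℝ (Fin (n i)))}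
    {x : ∀ i, EuclideanSpace ℝ (Fin (n i))} (hx : x ∈ jointK K) (i : Fin N)
    {a : EuclideanSpace ℝ (Fin (n i))} (ha : a ∈ K i) :
    Function.update x i a ∈ jointK K := by
  intro m
  rcases eq_or_ne m i with rfl | h
  · simpa using ha
  · simpa [Function.update_of_ne h] using hx m

/-- Truncated profile: keep coordinates `< t`, zero out the rest. -/
def Pt (t : ℕ) (x : ∀ i, EuclideanSpace ℝ (Fin (n i))) : ∀ i, EuclideanSpace ℝ (Fin (n i)) :=
  fun m => if (m : ℕ) < t then x m else 0

lemma Pt_mem {K : ∀ i, Set (EuclideanSpace ℝ (Fin (n i)))}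
    (h0 : (0 : ∀ i, EuclideanSpace ℝ (Fin (n i))) ∈ jointK K)
    {x : ∀ i, EuclideanSpace ℝ (Fin (n i))} (hx : x ∈ jointK K) (t : ℕ) :
    Pt t x ∈ jointK K := by
  intro m
  by_cases h : (m : ℕ) < t
  · simpa [Pt, h] using hx m
  · simpa [Pt, h] using h0 m

/-- The key rectangle identity extracted from the RHS condition. -/
lemma key {K : ∀ i, Set (EuclideanSpace ℝ (Fin (n i)))}
    {f : Fin N → (∀ i, EuclideanSpace ℝ (Fin (n i))) → ℝ}
    (h0 : (0 : ∀ i, EuclideanSpace ℝ (Fin (n i))) ∈ jointK K)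
    (hcond : ∀ i j : Fin N, i < j → ∀ z ∈ jointK K,
        ∀ (yi : EuclideanSpace ℝ (Fin (n i))) (yj : EuclideanSpace ℝ (Fin (n j))),
          z i + yi ∈ K i → z j + yj ∈ K j →
          hij f i j z yi yj
            = hij f i j (Function.update (Function.update z i 0) j 0) (z i + yi) (z j + yj)
              - hij f i j (Function.update (Function.update z i 0) j 0) (z i) (z j))
    {i j : Fin N} (hlt : i < j) {w : ∀ i, EuclideanSpace ℝ (Fin (n i))}
    (hw : w ∈ jointK K) {a a' : EuclideanSpace ℝ (Fin (n i))}
    (ha : a ∈ K i) (ha' : a' ∈ K i) {b : EuclideanSpace ℝ (Fin (n j))} (hb : b ∈ K j) :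
    f j (Function.update (Function.update w i a') j b)
      - f j (Function.update (Function.update w i a') j 0)
      - f j (Function.update (Function.update w i a) j b)
      + f j (Function.update (Function.update w i a) j 0)
    = f i (Function.update (Function.update w i a') j b)
      - f i (Function.update (Function.update w i a) j b)
      - f i (Function.update (Function.update w i a') j 0)
      + f i (Function.update (Function.update w i a) j 0) := by
  have hne : i ≠ j := ne_of_lt hlt
  set z : ∀ i, EuclideanSpace ℝ (Fin (n i)) := Function.update (Function.update w i a) j b with hz
  have hzK : z ∈ jointK K := mem_update (mem_update hw i ha) j hb
  have hzi : z i = a := by simp [hz, Function.update_of_ne hne]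
  have hzj : z j = b := by simp [hz]
  have H := hcond i j hlt z hzK (a' - a) 0 (by rw [hzi]; simpa using ha')
    (by rw [hzj]; simpa using hb)
  simp only [hij] at H
  set z0 : ∀ i, EuclideanSpace ℝ (Fin (n i)) := Function.update (Function.update z i 0) j 0 with hz0
  have hz0i : z0 i = 0 := by simp [hz0, Function.update_of_ne hne]
  have hz0j : z0 j = 0 := by simp [hz0]
  have harr : a + (a' - a) = a' := by abel
  simp only [hzi, hzj, hz0i, hz0j, harr, add_zero, zero_add] at H
  have e1 : Function.update z i a' = Function.update (Function.update w i a') j b := by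
    rw [hz, Function.update_comm hne, Function.update_idem, Function.update_comm hne.symm]
  have e4 : Function.update z0 i a' = Function.update (Function.update w i a') j 0 := by
    rw [hz0, hz, Function.update_comm hne, Function.update_idem, Function.update_comm hne.symm,
      Function.update_comm hne, Function.update_idem, Function.update_comm hne.symm,
      Function.update_idem]
  have e6 : Function.update z0 i a = Function.update (Function.update w i a) j 0 := by
    rw [hz0, hz, Function.update_comm hne, Function.update_idem, Function.update_comm hne.symm,
      Function.update_comm hne, Function.update_idem, Function.update_comm hne.symm,
      Function.update_idem]
  simp only [e1, e4, e6, Function.update_idem] at H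
  linarith [H]


lemma Pt_succ (x : ∀ i, EuclideanSpace ℝ (Fin (n i))) (k : Fin N) :
    Pt ((k : ℕ) + 1) x = Function.update (Pt (k : ℕ) x) k (x k) := by
  funext m
  rcases eq_or_ne m k with rfl | hmk
  · simp [Pt]
  · have hv : (m : ℕ) ≠ (k : ℕ) := fun h => hmk (Fin.ext h)
    by_cases h : (m : ℕ) < (k : ℕ)
    · simp [Pt, Function.update_of_ne hmk, h, Nat.lt_succ_of_lt h]
    · have h2 : ¬ (m : ℕ) < (k : ℕ) + 1 := by omega
      simp [Pt, Function.update_of_ne hmk, h, h2]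

lemma Pt_update_of_lt {t : ℕ} {i : Fin N} (hit : (i : ℕ) < t)
    (x : ∀ i, EuclideanSpace ℝ (Fin (n i))) (v : EuclideanSpace ℝ (Fin (n i))) :
    Pt t (Function.update x i v) = Function.update (Pt t x) i v := by
  funext m
  rcases eq_or_ne m i with rfl | hmi
  · simp [Pt, hit]
  · simp [Pt, Function.update_of_ne hmi]

lemma Pt_update_of_ge {t : ℕ} {i : Fin N} (hit : t ≤ (i : ℕ))
    (x : ∀ i, EuclideanSpace ℝ (Fin (n i))) (v : EuclideanSpace ℝ (Fin (n i))) :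
    Pt t (Function.update x i v) = Pt t x := by
  funext m
  rcases eq_or_ne m i with rfl | hmi
  · have hm : ¬ (m : ℕ) < t := by omega
    simp [Pt, hm]
  · simp [Pt, Function.update_of_ne hmi]

lemma Pt_top (x : ∀ i, EuclideanSpace ℝ (Fin (n i))) : Pt N x = x := by
  funext m
  simp [Pt, m.isLt]

end helpers

/-- If `0 ∈ K` and each `K i` is symmetric, the game is a potential game
iff for all players `i < j`,
`h_{ij}(z_i,z_j,y_i,y_j;z₋) = h_{ij}(0,0,z_i+y_i,z_j+y_j;z₋) − h_{ij}(0,0,z_i,z_j;z₋)`. -/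
theorem stmt8 {N : ℕ} {n : Fin N → ℕ}
    (K : ∀ i, Set (EuclideanSpace ℝ (Fin (n i))))
    (f : Fin N → (∀ i, EuclideanSpace ℝ (Fin (n i))) → ℝ)
    (h0 : (0 : ∀ i, EuclideanSpace ℝ (Fin (n i))) ∈ jointK K)
    (hsym : ∀ i, ∀ v ∈ K i, -v ∈ K i) :
    IsPotentialGame K f ↔
      ∀ i j : Fin N, i < j → ∀ z ∈ jointK K,
        ∀ (yi : EuclideanSpace ℝ (Fin (n i))) (yj : EuclideanSpace ℝ (Fin (n j))),
          z i + yi ∈ K i → z j + yj ∈ K j →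
          hij f i j z yi yj
            = hij f i j (Function.update (Function.update z i 0) j 0) (z i + yi) (z j + yj)
              - hij f i j (Function.update (Function.update z i 0) j 0) (z i) (z j) := by
  constructor
  · rintro ⟨φ, hφ⟩ i j hlt z hz yi yj hyi hyj
    have hne : i ≠ j := ne_of_lt hlt
    set u : ∀ i, EuclideanSpace ℝ (Fin (n i)) := Function.update z i (z i + yi) with hu
    have huK : u ∈ jointK K := mem_update hz i hyi
    have h1 : f i u - f i z = φ u - φ z := hφ i z hz _ hyi
    have huj : u j = z j := by rw [hu, Function.update_of_ne hne.symm]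
    have h2 : f j (Function.update u j (z j + yj)) - f j u
        = φ (Function.update u j (z j + yj)) - φ u := hφ j u huK (z j + yj) hyj
    set z0 : ∀ i, EuclideanSpace ℝ (Fin (n i)) :=
      Function.update (Function.update z i 0) j 0 with hz0
    have hz0K : z0 ∈ jointK K := mem_update (mem_update hz i (h0 i)) j (h0 j)
    have hz0i : z0 i = 0 := by simp [hz0, Function.update_of_ne hne]
    have hz0j : z0 j = 0 := by simp [hz0]
    set w1 : ∀ i, EuclideanSpace ℝ (Fin (n i)) := Function.update z0 i (z i + yi) with hw1
    set w2 : ∀ i, EuclideanSpace ℝ (Fin (n i)) := Function.update z0 i (z i) with hw2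
    have hw1K : w1 ∈ jointK K := mem_update hz0K i hyi
    have hw2K : w2 ∈ jointK K := mem_update hz0K i (hz i)
    have h3 : f i w1 - f i z0 = φ w1 - φ z0 := hφ i z0 hz0K _ hyi
    have h5 : f i w2 - f i z0 = φ w2 - φ z0 := hφ i z0 hz0K _ (hz i)
    have hw1j : w1 j = 0 := by rw [hw1, Function.update_of_ne hne.symm, hz0j]
    have hw2j : w2 j = 0 := by rw [hw2, Function.update_of_ne hne.symm, hz0j]
    have ew1 : Function.update w1 j (z j + yj) = Function.update u j (z j + yj) := by
      rw [hw1, hz0, hu, Function.update_comm hne.symm, Function.update_idem,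
        Function.update_idem]
    have ew2 : Function.update w2 j (z j) = z := by
      rw [hw2, hz0, Function.update_comm hne.symm, Function.update_idem,
        Function.update_idem]
      simp only [Function.update_eq_self]
    have h4 : f j (Function.update w1 j (z j + yj)) - f j w1
        = φ (Function.update w1 j (z j + yj)) - φ w1 := hφ j w1 hw1K (z j + yj) hyj
    have h6 : f j (Function.update w2 j (z j)) - f j w2
        = φ (Function.update w2 j (z j)) - φ w2 := hφ j w2 hw2K (z j) (hz j)
    rw [ew1] at h4
    rw [ew2] at h6
    simp only [hij, hz0i, hz0j, zero_add]
    rw [← hu, ← hw1, ← hw2, ew1, ew2]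
    linarith [h1, h2, h3, h4, h5, h6]
  · intro hcond
    refine ⟨fun x => ∑ k : Fin N, (f k (Pt ((k : ℕ) + 1) x) - f k (Pt (k : ℕ) x)), ?_⟩
    intro i x hx xi' hxi'
    set x' : ∀ i, EuclideanSpace ℝ (Fin (n i)) := Function.update x i xi' with hx'
    have key2 : ∀ k : Fin N,
        (f k (Pt ((k : ℕ) + 1) x') - f k (Pt (k : ℕ) x'))
          - (f k (Pt ((k : ℕ) + 1) x) - f k (Pt (k : ℕ) x))
        = (f i (Pt ((k : ℕ) + 1) x') - f i (Pt ((k : ℕ) + 1) x))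
          - (f i (Pt (k : ℕ) x') - f i (Pt (k : ℕ) x)) := by
      intro k
      rcases lt_trichotomy (k : ℕ) (i : ℕ) with hk | hk | hk
      · rw [hx', Pt_update_of_ge (by omega) x xi', Pt_update_of_ge (by omega) x xi']
        ring
      · have hki : k = i := Fin.ext hk
        subst hki
        rw [hx', Pt_update_of_ge le_rfl x xi']
        ring
      · -- i < k : use the rectangle identity
        have hik : i < k := hk
        have hne : i ≠ k := ne_of_lt hik
        set w : ∀ i, EuclideanSpace ℝ (Fin (n i)) := Pt (k : ℕ) x with hw
        have hwK : w ∈ jointK K := Pt_mem h0 hx (k : ℕ)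
        have hwi : w i = x i := by simp [hw, Pt, hk]
        have hwk : w k = 0 := by simp [Pt, hw]
        have E2 : Pt (k : ℕ) x' = Function.update (Function.update w i xi') k 0 := by
          rw [hx', Pt_update_of_lt hk x xi', ← hw]
          have : (Function.update w i xi') k = 0 := by
            rw [Function.update_of_ne hne.symm, hwk]
          conv_lhs => rw [← Function.update_eq_self k (Function.update w i xi')]
          rw [this]
        have E1 : Pt ((k : ℕ) + 1) x' = Function.update (Function.update w i xi') k (x k) := by
          rw [hx', Pt_update_of_lt (by omega) x xi', Pt_succ, ← hw,
            Function.update_comm hne.symm]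
        have E4 : Function.update (Function.update w i (x i)) k 0 = w := by
          have e : Function.update w i (x i) = w := by
            conv_lhs => rw [← hwi]
            exact Function.update_eq_self i w
          rw [e]
          conv_rhs => rw [← Function.update_eq_self k w]
          rw [hwk]
        have E3 : Pt ((k : ℕ) + 1) x = Function.update (Function.update w i (x i)) k (x k) := by
          have e : Function.update w i (x i) = w := by
            conv_lhs => rw [← hwi]
            exact Function.update_eq_self i w
          rw [e, Pt_succ, ← hw]
        have KK := key h0 hcond hik hwK (hx i) hxi' (hx k)
        rw [E4] at KK
        rw [E1, E2, E3]
        linarith [KK]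
    have sum1 : (∑ k : Fin N, (f k (Pt ((k : ℕ) + 1) x') - f k (Pt (k : ℕ) x')))
        - (∑ k : Fin N, (f k (Pt ((k : ℕ) + 1) x) - f k (Pt (k : ℕ) x)))
        = ∑ k : Fin N, ((f i (Pt ((k : ℕ) + 1) x') - f i (Pt ((k : ℕ) + 1) x))
          - (f i (Pt (k : ℕ) x') - f i (Pt (k : ℕ) x))) := by
      rw [← Finset.sum_sub_distrib]
      exact Finset.sum_congr rfl fun k _ => key2 k
    have sum2 : ∑ k : Fin N, ((f i (Pt ((k : ℕ) + 1) x') - f i (Pt ((k : ℕ) + 1) x))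
          - (f i (Pt (k : ℕ) x') - f i (Pt (k : ℕ) x)))
        = (f i (Pt N x') - f i (Pt N x)) - (f i (Pt 0 x') - f i (Pt 0 x)) := by
      rw [Fin.sum_univ_eq_sum_range
        (fun t => (f i (Pt (t + 1) x') - f i (Pt (t + 1) x)) - (f i (Pt t x') - f i (Pt t x))) N]
      exact Finset.sum_range_sub (fun t => f i (Pt t x') - f i (Pt t x)) N
    have hPt0 : Pt 0 x' = Pt 0 x := by rw [hx', Pt_update_of_ge (Nat.zero_le _) x xi']
    rw [Pt_top, Pt_top, hPt0] at sum2
    simp only []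
    rw [sum1, sum2]
    ring
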